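/- Let q ≥ 2 be an integer and n, k, s integers with 4 ≤ n, 2 ≤ k ≤ 3n/8, s ≤ n/2, and suppose (q,n,k) ∉ {(2,8,3),(2,11,4)}. Then (q-1)(q^n - q^s) - n(q^k - 1)(q^k - q) > 0. -/

import Mathlib

private lemma nat_L1 : ∀ u : ℕ, 4 * u + 8 < 16 * 2 ^ u := by
  intro u
  induction u with
  | zero => norm_num
  | succ v ih =>
    have h1 : (1 : ℕ) ≤ 2 ^ v := Nat.one_le_two_pow
    rw [pow_succ]
    nlinarith

private lemma nat_L2 : ∀ u : ℕ, 3 ≤ u → 4 * u + 8 < 3 * 2 ^ u := by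
  intro u hu
  induction u with
  | zero => omega
  | succ v ih =>
    rcases Nat.lt_or_ge v 3 with h | h
    · interval_cases v <;> simp_all
    · have h2 := ih h
      have h1 : (8 : ℕ) ≤ 2 ^ v := by
        calc (8:ℕ) = 2 ^ 3 := by norm_num
        _ ≤ 2 ^ v := Nat.pow_le_pow_right (by norm_num) h
      rw [pow_succ]
      nlinarith

private lemma stmt8_gen (q : ℤ) (n k s : ℕ) (hq : 2 ≤ q) (hn : 6 ≤ n) (hk : 1 ≤ k)
    (hk2 : 8 * k ≤ 3 * n) (hsn : 2 * s ≤ n)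
    (hbig : (n : ℤ) < (q - 1) * (q ^ 2 - 1) * q ^ ((n + 3) / 4 - 2)) :
    0 < (q - 1) * (q ^ n - q ^ s) - (n : ℤ) * ((q ^ k - 1) * (q ^ k - q)) := by
  set t := (n + 3) / 4 with ht
  have hq1 : (1 : ℤ) ≤ q := by linarith
  have hqpos : (0 : ℤ) < q := by linarith
  have ht2 : 2 ≤ t := by omega
  have hkt : 2 * k ≤ n - t := by omega
  have hqk : q ≤ q ^ k := le_self_pow₀ hq1 (by omega)
  have hpk : (0 : ℤ) < q ^ k := pow_pos hqpos k
  have h1 : (q ^ k - 1) * (q ^ k - q) ≤ q ^ (2 * k) := by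
    have e : q ^ (2 * k) = q ^ k * q ^ k := by rw [two_mul, pow_add]
    rw [e]; nlinarith
  have h2 : q ^ (2 * k) ≤ q ^ (n - t) := pow_le_pow_right₀ hq1 hkt
  have h3 : q ^ s ≤ q ^ (n - 2) := pow_le_pow_right₀ hq1 (by omega)
  have key : (n : ℤ) * q ^ (n - t) < (q - 1) * (q ^ n - q ^ (n - 2)) := by
    have e2 : (q : ℤ) ^ n = q ^ 2 * q ^ (n - 2) := by rw [← pow_add]; congr 1; omega
    have e1 : (q : ℤ) ^ (n - 2) = q ^ (t - 2) * q ^ (n - t) := by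
      rw [← pow_add]; congr 1; omega
    have hp : (0 : ℤ) < q ^ (n - t) := pow_pos hqpos _
    calc (n : ℤ) * q ^ (n - t) < (q - 1) * (q ^ 2 - 1) * q ^ (t - 2) * q ^ (n - t) :=
          mul_lt_mul_of_pos_right hbig hp
      _ = (q - 1) * (q ^ n - q ^ (n - 2)) := by rw [e2, e1]; ring
  have hA : (n : ℤ) * ((q ^ k - 1) * (q ^ k - q)) ≤ (n : ℤ) * q ^ (n - t) :=
    mul_le_mul_of_nonneg_left (h1.trans h2) (by positivity)
  have hB : (q - 1) * (q ^ n - q ^ (n - 2)) ≤ (q - 1) * (q ^ n - q ^ s) :=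
    mul_le_mul_of_nonneg_left (by linarith) (by linarith)
  linarith

/-- For `q ≥ 2`, `4 ≤ n`, `2 ≤ k ≤ 3n/8`, `1 ≤ s ≤ n/2`, excluding
`(q,n,k) ∈ {(2,8,3),(2,11,4)}`: `(q-1)(q^n - q^s) - n(q^k-1)(q^k-q) > 0`. -/
theorem stmt8 (q : ℤ) (n k s : ℕ) (hq : 2 ≤ q) (hn : 4 ≤ n) (hk : 2 ≤ k)
    (hk2 : 8 * k ≤ 3 * n) (hs : 1 ≤ s) (hsn : 2 * s ≤ n)
    (hex1 : ¬(q = 2 ∧ n = 8 ∧ k = 3)) (hex2 : ¬(q = 2 ∧ n = 11 ∧ k = 4)) :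
    0 < (q - 1) * (q ^ n - q ^ s) - (n : ℤ) * ((q ^ k - 1) * (q ^ k - q)) := by
  have hn6 : 6 ≤ n := by omega
  rcases lt_or_ge q 3 with hq3 | hq3
  · have hq2 : q = 2 := by omega
    subst hq2
    rcases lt_or_ge n 17 with hn17 | hn17
    · have h3 : (2 : ℤ) ^ s ≤ 2 ^ (n / 2) :=
        pow_le_pow_right₀ (by norm_num) (by omega)
      have hk6 : k ≤ 6 := by omega
      interval_cases n <;> interval_cases k <;>
        first
          | omega
          | exact absurd ⟨rfl, rfl, rfl⟩ hex1
          | exact absurd ⟨rfl, rfl, rfl⟩ hex2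
          | (norm_num at h3 ⊢; linarith)
    · apply stmt8_gen 2 n k s (by norm_num) hn6 (by omega) hk2 hsn
      set u := (n + 3) / 4 - 2 with hu
      have hu3 : 3 ≤ u := by omega
      have hnat : n < 3 * 2 ^ u := lt_of_le_of_lt (show n ≤ 4 * u + 8 by omega) (nat_L2 u hu3)
      have : (n : ℤ) < 3 * 2 ^ u := by exact_mod_cast hnat
      norm_num
      linarith
  · apply stmt8_gen q n k s hq hn6 (by omega) hk2 hsn
    set u := (n + 3) / 4 - 2 with hu
    have h16 : (16 : ℤ) ≤ (q - 1) * (q ^ 2 - 1) := by nlinarith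
    have hqu : (2 : ℤ) ^ u ≤ q ^ u := pow_le_pow_left₀ (by norm_num) (by linarith) u
    have hnat : n < 16 * 2 ^ u := lt_of_le_of_lt (show n ≤ 4 * u + 8 by omega) (nat_L1 u)
    have hn4 : (n : ℤ) < 16 * 2 ^ u := by exact_mod_cast hnat
    calc (n : ℤ) < 16 * 2 ^ u := hn4
      _ ≤ (q - 1) * (q ^ 2 - 1) * q ^ u :=
          mul_le_mul h16 hqu (by positivity) (by linarith)
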